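/- arXiv:1904.04326 — 2 statements merged into one kernel-verified Lean document; each statement's English description precedes it below -/
import Mathlib

section
/- Under gradient flow on a convex differentiable F : ℝᵐ → ℝ ≥ 0 with a'(t) = -∇F(a(t)), for any a* and t ≥ 0: ‖a(t) - a*‖² ≤ 2t F(a*) + ‖a(0) - a*‖². -/
open InnerProductSpace

/-- Drift bound for gradient flow on a convex nonnegative function:
`‖a(t) - a*‖² ≤ 2 t F(a*) + ‖a(0) - a*‖²`. -/
theorem stmt_10 {m : ℕ} (F : EuclideanSpace ℝ (Fin m) → ℝ)
    (hF : ConvexOn ℝ Set.univ F) (hFd : Differentiable ℝ F)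
    (hFpos : ∀ x, 0 ≤ F x)
    (astar : EuclideanSpace ℝ (Fin m)) (a : ℝ → EuclideanSpace ℝ (Fin m))
    (hflow : ∀ t, HasDerivAt a (-(gradient F (a t))) t) :
    ∀ t, 0 ≤ t → ‖a t - astar‖ ^ 2 ≤ 2 * t * F astar + ‖a 0 - astar‖ ^ 2 := by
  have hFf : ∀ x, HasFDerivAt F ((InnerProductSpace.toDual ℝ _) (gradient F x)) x := fun x =>
    hasGradientAt_iff_hasFDerivAt.mp (hFd x).hasGradientAt
  -- gradient inequality for convex functions
  have grad_ineq : ∀ x y : EuclideanSpace ℝ (Fin m),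
      (inner ℝ (gradient F x) (y - x) : ℝ) ≤ F y - F x := by
    intro x y
    have hline : HasDerivAt (fun s : ℝ => x + s • (y - x)) (y - x) 0 := by
      simpa using ((hasDerivAt_id (0:ℝ)).smul_const (y - x)).const_add x
    have hφ0 : HasDerivAt (fun s : ℝ => F (x + s • (y - x)))
        (inner ℝ (gradient F x) (y - x) : ℝ) 0 := by
      have h1 : HasFDerivAt F ((InnerProductSpace.toDual ℝ _) (gradient F x))
          (x + (0:ℝ) • (y - x)) := by simpa using hFf x
      have h2 := h1.comp_hasDerivAt 0 hline
      simp only [InnerProductSpace.toDual_apply_apply] at h2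
      exact h2
    have hφc : ConvexOn ℝ Set.univ (fun s : ℝ => F (x + s • (y - x))) := by
      have h := hF.comp_affineMap (AffineMap.lineMap x y : ℝ →ᵃ[ℝ] EuclideanSpace ℝ (Fin m))
      have heq : (fun s : ℝ => F (x + s • (y - x)))
          = F ∘ (AffineMap.lineMap x y : ℝ →ᵃ[ℝ] EuclideanSpace ℝ (Fin m)) := by
        funext s
        simp [AffineMap.lineMap_apply, add_comm]
      rw [heq]
      simpa using h
    have := hφc.le_slope_of_hasDerivAt (Set.mem_univ 0) (Set.mem_univ 1) one_pos hφ0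
    simpa [slope_def_field] using this
  -- derivative of the Lyapunov function
  set J : ℝ → ℝ := fun t => t * (F (a t) - F astar)
      + (1/2) * (inner ℝ (a t - astar) (a t - astar) : ℝ) with hJ
  have hJd : ∀ t, HasDerivAt J
      ((F (a t) - F astar) + t * (inner ℝ (gradient F (a t)) (-(gradient F (a t))) : ℝ)
        + (1/2) * ((inner ℝ (a t - astar) (-(gradient F (a t))) : ℝ)
          + (inner ℝ (-(gradient F (a t))) (a t - astar) : ℝ))) t := by
    intro t
    have hFa : HasDerivAt (fun t => F (a t))
        (inner ℝ (gradient F (a t)) (-(gradient F (a t))) : ℝ) t := by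
      have h2 := (hFf (a t)).comp_hasDerivAt t (hflow t)
      simp only [InnerProductSpace.toDual_apply_apply] at h2
      exact h2
    have hb : HasDerivAt (fun t => a t - astar) (-(gradient F (a t))) t :=
      (hflow t).sub_const astar
    have hinner : HasDerivAt (fun t => (inner ℝ (a t - astar) (a t - astar) : ℝ))
        ((inner ℝ (a t - astar) (-(gradient F (a t))) : ℝ)
          + (inner ℝ (-(gradient F (a t))) (a t - astar) : ℝ)) t :=
      hb.inner ℝ hb
    exact (((hasDerivAt_id t).mul (hFa.sub_const (F astar)))).add
      (hinner.const_mul (1/2)) |>.congr_deriv (by simp only [id_eq]; ring)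
  -- J is antitone on [0, ∞)
  have hJanti : AntitoneOn J (Set.Ici (0:ℝ)) := by
    apply antitoneOn_of_deriv_nonpos (convex_Ici 0)
    · exact fun t _ => (hJd t).differentiableAt.continuousAt.continuousWithinAt
    · intro t ht
      exact ((hJd t).differentiableAt).differentiableWithinAt
    · intro t ht
      rw [(hJd t).deriv]
      have ht0 : (0:ℝ) ≤ t := le_of_lt (by simpa using ht)
      have h1 := grad_ineq (a t) astar
      have h2 : (inner ℝ (gradient F (a t)) (astar - a t) : ℝ)
          = - (inner ℝ (gradient F (a t)) (a t - astar) : ℝ) := by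
        rw [← inner_neg_right]; congr 1; abel
      have h3 : (inner ℝ (gradient F (a t)) (-(gradient F (a t))) : ℝ)
          = - ‖gradient F (a t)‖^2 := by
        rw [inner_neg_right, real_inner_self_eq_norm_sq]
      have h4 : (inner ℝ (a t - astar) (-(gradient F (a t))) : ℝ)
          = - (inner ℝ (gradient F (a t)) (a t - astar) : ℝ) := by
        rw [inner_neg_right, real_inner_comm]
      have h5 : (inner ℝ (-(gradient F (a t))) (a t - astar) : ℝ)
          = - (inner ℝ (gradient F (a t)) (a t - astar) : ℝ) := by
        rw [inner_neg_left]
      rw [h3, h4, h5]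
      have hnn : (0:ℝ) ≤ ‖gradient F (a t)‖^2 := sq_nonneg _
      nlinarith [h1, h2.symm ▸ h1]
  intro t ht
  have key : J t ≤ J 0 := hJanti (Set.self_mem_Ici) ht ht
  have hsq : ∀ v : EuclideanSpace ℝ (Fin m), (inner ℝ v v : ℝ) = ‖v‖^2 := fun v =>
    real_inner_self_eq_norm_sq v
  have hJt : J t = t * (F (a t) - F astar) + (1/2) * ‖a t - astar‖^2 := by
    rw [hJ]; simp only [hsq]
  have hJ0 : J 0 = (1/2) * ‖a 0 - astar‖^2 := by
    rw [hJ]; simp only [hsq]; ring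
  rw [hJt, hJ0] at key
  have hFt := hFpos (a t)
  nlinarith [mul_nonneg ht hFt]
end

section
/- Let a, a' : [0,T] → ℝ and b, b' : [0,T] → ℝ be absolutely continuous with |a'(t)| ≤ L·|b(t)|, |b'(t)| ≤ L·|a(t)|, |a(0)| = c/m, |b(0)| = 1 (L, c, m > 0). Then |a(t)| ≤ cosh(Lt)·(c/m) + sinh(Lt) and |b(t)| ≤ sinh(Lt)·(c/m) + cosh(Lt) for all t ∈ [0,T]. -/
open Set Filter Real

/-- Coupled Grönwall bound: if `|a'| ≤ L|b|`, `|b'| ≤ L|a|`, `|a 0| = c/m`, `|b 0| = 1`,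
then `|a t| ≤ cosh(Lt) c/m + sinh(Lt)` and `|b t| ≤ sinh(Lt) c/m + cosh(Lt)` on `[0,T]`. -/
theorem stmt_11 (T L c m : ℝ) (hL : 0 < L) (hc : 0 < c) (hm : 0 < m)
    (a b a' b' : ℝ → ℝ)
    (ha : ∀ t ∈ Set.Icc (0 : ℝ) T, HasDerivAt a (a' t) t)
    (hb : ∀ t ∈ Set.Icc (0 : ℝ) T, HasDerivAt b (b' t) t)
    (ha' : ∀ t ∈ Set.Icc (0 : ℝ) T, |a' t| ≤ L * |b t|)
    (hb' : ∀ t ∈ Set.Icc (0 : ℝ) T, |b' t| ≤ L * |a t|)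
    (ha0 : |a 0| = c / m) (hb0 : |b 0| = 1) :
    ∀ t ∈ Set.Icc (0 : ℝ) T,
      |a t| ≤ Real.cosh (L * t) * (c / m) + Real.sinh (L * t) ∧
      |b t| ≤ Real.sinh (L * t) * (c / m) + Real.cosh (L * t) := by
  set φ : ℝ → ℝ := fun t => Real.cosh (L * t) * (c / m) + Real.sinh (L * t) with hφdef
  set ψ : ℝ → ℝ := fun t => Real.sinh (L * t) * (c / m) + Real.cosh (L * t) with hψdef
  set g : ℝ → ℝ := fun t => max (|a t| - φ t) (|b t| - ψ t) with hgdef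
  have hmul : ∀ t : ℝ, HasDerivAt (fun s : ℝ => L * s) L t := fun t => by
    simpa using (hasDerivAt_id t).const_mul L
  have hφ : ∀ t, HasDerivAt φ (L * ψ t) t := by
    intro t
    have h1 := (((Real.hasDerivAt_cosh (L * t)).comp t (hmul t)).mul_const (c / m))
    have h2 := ((Real.hasDerivAt_sinh (L * t)).comp t (hmul t))
    have := h1.add h2
    refine this.congr_deriv ?_
    simp [hψdef]; ring
  have hψ : ∀ t, HasDerivAt ψ (L * φ t) t := by
    intro t
    have h1 := (((Real.hasDerivAt_sinh (L * t)).comp t (hmul t)).mul_const (c / m))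
    have h2 := ((Real.hasDerivAt_cosh (L * t)).comp t (hmul t))
    have := h1.add h2
    refine this.congr_deriv ?_
    simp [hφdef]; ring
  -- continuity of g on Icc 0 T
  have hacont : ContinuousOn a (Set.Icc 0 T) := fun t ht =>
    (ha t ht).continuousAt.continuousWithinAt
  have hbcont : ContinuousOn b (Set.Icc 0 T) := fun t ht =>
    (hb t ht).continuousAt.continuousWithinAt
  have hφcont : Continuous φ := by fun_prop
  have hψcont : Continuous ψ := by fun_prop
  have hgcont : ContinuousOn g (Set.Icc 0 T) :=
    ((continuous_abs.comp_continuousOn hacont).sub hφcont.continuousOn).sup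
      ((continuous_abs.comp_continuousOn hbcont).sub hψcont.continuousOn)
  -- the key slope estimate
  have key : ∀ x ∈ Set.Ico (0 : ℝ) T, ∀ r, L * g x < r →
      ∃ᶠ z in nhdsWithin x (Set.Ioi x), (z - x)⁻¹ * (g z - g x) < r := by
    intro x hx r hr
    have hxI : x ∈ Set.Icc 0 T := Set.Ico_subset_Icc_self hx
    have hax : |a x| - φ x ≤ g x := le_max_left _ _
    have hbx : |b x| - ψ x ≤ g x := le_max_right _ _
    -- limits of slopes
    have hsa : Filter.Tendsto (fun z => |slope a x z|) (nhdsWithin x (Set.Ioi x)) (nhds |a' x|) :=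
      ((hasDerivAt_iff_tendsto_slope.1 (ha x hxI)).mono_left
        (nhdsWithin_mono x fun z hz => ne_of_gt hz)).abs
    have hsb : Filter.Tendsto (fun z => |slope b x z|) (nhdsWithin x (Set.Ioi x)) (nhds |b' x|) :=
      ((hasDerivAt_iff_tendsto_slope.1 (hb x hxI)).mono_left
        (nhdsWithin_mono x fun z hz => ne_of_gt hz)).abs
    have hsφ : Filter.Tendsto (slope φ x) (nhdsWithin x (Set.Ioi x)) (nhds (L * ψ x)) :=
      (hasDerivAt_iff_tendsto_slope.1 (hφ x)).mono_left
        (nhdsWithin_mono x fun z hz => ne_of_gt hz)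
    have hsψ : Filter.Tendsto (slope ψ x) (nhdsWithin x (Set.Ioi x)) (nhds (L * φ x)) :=
      (hasDerivAt_iff_tendsto_slope.1 (hψ x)).mono_left
        (nhdsWithin_mono x fun z hz => ne_of_gt hz)
    have hlim1 : |a' x| - L * ψ x < r := by
      have h1 : |a' x| ≤ L * |b x| := ha' x hxI
      have h2 : |b x| ≤ ψ x + g x := by linarith
      nlinarith
    have hlim2 : |b' x| - L * φ x < r := by
      have h1 : |b' x| ≤ L * |a x| := hb' x hxI
      have h2 : |a x| ≤ φ x + g x := by linarith
      nlinarith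
    have ev1 : ∀ᶠ z in nhdsWithin x (Set.Ioi x), |slope a x z| - slope φ x z < r :=
      (hsa.sub hsφ).eventually (gt_mem_nhds hlim1)
    have ev2 : ∀ᶠ z in nhdsWithin x (Set.Ioi x), |slope b x z| - slope ψ x z < r :=
      (hsb.sub hsψ).eventually (gt_mem_nhds hlim2)
    have evz : ∀ᶠ z in nhdsWithin x (Set.Ioi x), x < z := self_mem_nhdsWithin
    refine ((ev1.and (ev2.and evz)).mono ?_).frequently
    rintro z ⟨h1, h2, hz⟩
    have hzx : (0 : ℝ) < z - x := sub_pos.2 hz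
    have hinv : (0 : ℝ) ≤ (z - x)⁻¹ := le_of_lt (inv_pos.2 hzx)
    have branchA : (z - x)⁻¹ * ((|a z| - φ z) - g x) < r := by
      have e1 : (|a z| - φ z) - g x ≤ |a z - a x| - (φ z - φ x) := by
        have := abs_sub_abs_le_abs_sub (a z) (a x)
        linarith
      have e2 : (z - x)⁻¹ * ((|a z| - φ z) - g x) ≤ |slope a x z| - slope φ x z := by
        have : (z - x)⁻¹ * ((|a z| - φ z) - g x) ≤ (z - x)⁻¹ * (|a z - a x| - (φ z - φ x)) :=
          mul_le_mul_of_nonneg_left e1 hinv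
        calc (z - x)⁻¹ * ((|a z| - φ z) - g x)
            ≤ (z - x)⁻¹ * (|a z - a x| - (φ z - φ x)) := this
          _ = |slope a x z| - slope φ x z := by
              rw [slope_def_field, slope_def_field, abs_div, abs_of_pos hzx]
              field_simp
      linarith
    have branchB : (z - x)⁻¹ * ((|b z| - ψ z) - g x) < r := by
      have e1 : (|b z| - ψ z) - g x ≤ |b z - b x| - (ψ z - ψ x) := by
        have := abs_sub_abs_le_abs_sub (b z) (b x)
        linarith
      have e2 : (z - x)⁻¹ * ((|b z| - ψ z) - g x) ≤ |slope b x z| - slope ψ x z := by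
        have : (z - x)⁻¹ * ((|b z| - ψ z) - g x) ≤ (z - x)⁻¹ * (|b z - b x| - (ψ z - ψ x)) :=
          mul_le_mul_of_nonneg_left e1 hinv
        calc (z - x)⁻¹ * ((|b z| - ψ z) - g x)
            ≤ (z - x)⁻¹ * (|b z - b x| - (ψ z - ψ x)) := this
          _ = |slope b x z| - slope ψ x z := by
              rw [slope_def_field, slope_def_field, abs_div, abs_of_pos hzx]
              field_simp
      linarith
    rcases max_cases (|a z| - φ z) (|b z| - ψ z) with ⟨hgz, _⟩ | ⟨hgz, _⟩
    · have : g z = |a z| - φ z := hgz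
      rw [this]; exact branchA
    · have : g z = |b z| - ψ z := hgz
      rw [this]; exact branchB
  -- initial value
  have hg0 : g 0 ≤ 0 := by
    simp only [hgdef, hφdef, hψdef]
    simp [Real.cosh_zero, Real.sinh_zero, ha0, hb0]
  -- Grönwall
  have main := le_gronwallBound_of_liminf_deriv_right_le (f := g) (f' := fun x => L * g x)
    (δ := 0) (K := L) (ε := 0) (a := 0) (b := T) hgcont key hg0
    (fun x _ => by simp)
  intro t ht
  have := main t ht
  rw [gronwallBound_ε0] at this
  simp only [zero_mul] at this
  have hgt : g t ≤ 0 := this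
  have h1 : |a t| - φ t ≤ 0 := le_trans (le_max_left _ _) hgt
  have h2 : |b t| - ψ t ≤ 0 := le_trans (le_max_right _ _) hgt
  constructor <;> [skip; skip] <;> simp only [hφdef, hψdef] at h1 h2 <;> linarith
end
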